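/- For n ≥ 2, the real linear span of the set {Δᵀ − Δ : Δ is a product of two symmetric positive definite n×n real matrices} equals the space of all skew-symmetric n×n real matrices. In particular, for all indices i ≠ j there exists a product Δ of two symmetric positive definite matrices with Δᵀ − Δ = e_i e_jᵀ − e_j e_iᵀ, where e_1,…,e_n is the standard basis of ℝⁿ. -/

import Mathlib

open Matrix

/-- The space `so(n)` of skew-symmetric `n × n` real matrices, as a submodule of the
matrix space. -/
def skewSubmodule (n : ℕ) : Submodule ℝ (Matrix (Fin n) (Fin n) ℝ) where
  carrier := {M | Mᵀ = -M}
  add_mem' := by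
    intro a b ha hb
    simp only [Set.mem_setOf_eq] at *
    rw [Matrix.transpose_add, ha, hb, neg_add]
  zero_mem' := by simp
  smul_mem' := by
    intro c a ha
    simp only [Set.mem_setOf_eq] at *
    rw [Matrix.transpose_smul, ha, smul_neg]

lemma mem_skewSubmodule {n : ℕ} {M : Matrix (Fin n) (Fin n) ℝ} :
    M ∈ skewSubmodule n ↔ Mᵀ = -M := Iff.rfl

lemma dot_std (n : ℕ) (i j : Fin n) (x : Fin n → ℝ) :
    dotProduct x ((Matrix.single i j (1:ℝ)) *ᵥ x) = x i * x j := by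
  rw [single_mulVec]
  simp [← Pi.single_zero, Function.update, dotProduct]

lemma S_posdef (n : ℕ) (i j : Fin n) (hij : i ≠ j) :
    ((2:ℝ) • (1 : Matrix (Fin n) (Fin n) ℝ) + Matrix.single i j 1 + Matrix.single j i 1).PosDef := by
  rw [posDef_iff_dotProduct_mulVec]
  constructor
  · ext a b
    simp [Matrix.single, one_apply, and_comm, eq_comm]
    split_ifs <;> simp_all
  · intro x hx
    have hq : dotProduct (star x)
        (((2:ℝ) • (1 : Matrix (Fin n) (Fin n) ℝ) + Matrix.single i j 1 + Matrix.single j i 1) *ᵥ x)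
        = 2 * (∑ k, x k * x k) + x i * x j + x j * x i := by
      simp only [star_trivial, add_mulVec, dotProduct_add, smul_mulVec, one_mulVec,
        dotProduct_smul, smul_eq_mul, dot_std]
      rw [dotProduct]
    rw [hq]
    have h1 : x i * x i + x j * x j ≤ ∑ k, x k * x k := by
      have := Finset.sum_le_sum_of_subset_of_nonneg (f := fun k => x k * x k)
        (Finset.subset_univ {i, j}) (by intro k _ _; exact mul_self_nonneg _)
      rwa [Finset.sum_pair hij] at this
    have h2 : 0 < ∑ k, x k * x k := by
      obtain ⟨k, hk⟩ := Function.ne_iff.mp hx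
      exact Finset.sum_pos' (fun k _ => mul_self_nonneg _) ⟨k, Finset.mem_univ k, mul_self_pos.2 hk⟩
    nlinarith [sq_nonneg (x i + x j)]

lemma key (n : ℕ) (i j : Fin n) (hij : i ≠ j) :
    ∃ X S : Matrix (Fin n) (Fin n) ℝ, X.PosDef ∧ S.PosDef ∧
      (X * S)ᵀ - X * S =
        Matrix.single i j (1 : ℝ) - Matrix.single j i (1 : ℝ) := by
  refine ⟨diagonal (fun k => if k = j then (2:ℝ) else 1),
    (2:ℝ) • (1 : Matrix (Fin n) (Fin n) ℝ) + Matrix.single i j 1 + Matrix.single j i 1,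
    PosDef.diagonal (fun k => by split <;> norm_num), S_posdef n i j hij, ?_⟩
  have hSt : ((2:ℝ) • (1 : Matrix (Fin n) (Fin n) ℝ) + Matrix.single i j 1 + Matrix.single j i 1)ᵀ
      = (2:ℝ) • (1 : Matrix (Fin n) (Fin n) ℝ) + Matrix.single i j 1 + Matrix.single j i 1 := by
    ext a b
    simp [Matrix.single, one_apply, and_comm, eq_comm]
    split_ifs <;> simp_all
  rw [transpose_mul, diagonal_transpose, hSt]
  ext a b
  rw [Matrix.sub_apply, mul_diagonal, diagonal_mul]
  simp only [Matrix.add_apply, Matrix.smul_apply, one_apply, smul_eq_mul, Matrix.single, of_apply, Matrix.sub_apply]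
  split_ifs <;> subst_vars <;> simp_all <;> ring

lemma skew_decomp (n : ℕ) (M : Matrix (Fin n) (Fin n) ℝ) (hMt : Mᵀ = -M) :
    M = ∑ p : Fin n × Fin n, (M p.1 p.2 / 2) •
      (Matrix.single p.1 p.2 (1:ℝ) - Matrix.single p.2 p.1 1) := by
  ext a b
  have hba : M b a = -M a b := by
    have := congrFun (congrFun hMt a) b
    simpa using this
  rw [Matrix.sum_apply]
  simp only [Matrix.smul_apply, Matrix.sub_apply, Matrix.single, of_apply, smul_eq_mul, ite_and, mul_sub,
    mul_ite, mul_one, mul_zero]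
  rw [Finset.sum_sub_distrib, Fintype.sum_prod_type, Fintype.sum_prod_type]
  simp [Finset.sum_ite_eq, Finset.sum_ite_eq', hba]
  ring

/-- For `n ≥ 2`, the real linear span of the matrices `Δᵀ - Δ`, where `Δ` ranges over
products of two symmetric positive definite matrices, is the whole space of
skew-symmetric matrices.  In particular, for all `i ≠ j` there is such a `Δ` with
`Δᵀ - Δ = e_i e_jᵀ - e_j e_iᵀ`. -/
theorem statement7 (n : ℕ) (hn : 2 ≤ n) :
    Submodule.span ℝ {M : Matrix (Fin n) (Fin n) ℝ |
        ∃ X S : Matrix (Fin n) (Fin n) ℝ, X.PosDef ∧ S.PosDef ∧ M = (X * S)ᵀ - X * S} =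
      skewSubmodule n ∧
    ∀ i j : Fin n, i ≠ j →
      ∃ X S : Matrix (Fin n) (Fin n) ℝ, X.PosDef ∧ S.PosDef ∧
        (X * S)ᵀ - X * S =
          Matrix.single i j (1 : ℝ) - Matrix.single j i (1 : ℝ) := by
  constructor
  · apply le_antisymm
    · rw [Submodule.span_le]
      rintro M ⟨X, S, hX, hS, rfl⟩
      rw [SetLike.mem_coe, mem_skewSubmodule, transpose_sub, transpose_transpose, neg_sub]
    · intro M hM
      have hMt : Mᵀ = -M := hM
      rw [skew_decomp n M hMt]
      refine Submodule.sum_mem _ (fun p _ => ?_)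
      by_cases h : p.1 = p.2
      · rw [h]; simp
      · refine Submodule.smul_mem _ _ (Submodule.subset_span ?_)
        obtain ⟨X, S, hX, hS, hEq⟩ := key n p.1 p.2 h
        exact ⟨X, S, hX, hS, hEq.symm⟩
  · intro i j hij
    exact key n i j hij
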